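/- For any set A ⊆ {0,1}^n of density 1/2 there exists a bijection φ : {0,1}^{n-1} → A with average stretch avgStretch(φ) ≤ 2√(2n) + 1 = O(√n). -/

import Mathlib

open Finset

set_option linter.unusedSectionVars false

namespace Stmt8Aux

variable {V : Type*} [Fintype V] [DecidableEq V]

/-- Reduced cost of an edge. -/
def W (d : V → V → ℝ) (σ : Equiv.Perm V) (a b : V) : ℝ := d b (σ a) - d a (σ a)

/-- Value of a chain. -/
def Vc (d : V → V → ℝ) (σ : Equiv.Perm V) : List V → V → ℝ
  | [], _ => 0
  | a :: l, y => W d σ a y + Vc d σ l a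

lemma Vc_nil (d : V → V → ℝ) (σ : Equiv.Perm V) (y : V) : Vc d σ [] y = 0 := rfl

lemma Vc_cons (d : V → V → ℝ) (σ : Equiv.Perm V) (a : V) (l : List V) (y : V) :
    Vc d σ (a :: l) y = W d σ a y + Vc d σ l a := rfl

lemma Vc_append (d : V → V → ℝ) (σ : Equiv.Perm V) (a : List V) (h : V) (t : List V) (y : V) :
    Vc d σ (a ++ h :: t) y = Vc d σ (a ++ [h]) y + Vc d σ t h := by
  induction a generalizing y with
  | nil => simp [Vc_cons, Vc_nil]
  | cons z a ih => simp only [List.cons_append, Vc_cons, ih]; ring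

lemma Vc_shift (d : V → V → ℝ) (σ : Equiv.Perm V) (rest : List V) (x y y' : V) :
    Vc d σ (rest ++ [x]) y - Vc d σ (rest ++ [x]) y'
      = W d σ (rest.headD x) y - W d σ (rest.headD x) y' := by
  cases rest with
  | nil => simp [Vc_cons]
  | cons r rs => simp [Vc_cons]

lemma cycle_sum (d : V → V → ℝ) (σ : Equiv.Perm V) (x : V) (l : List V)
    (hnd : (x :: l).Nodup) :
    ∃ c : Equiv.Perm V, (∀ v, v ∉ (x :: l) → c v = v) ∧ c (l.headD x) = x ∧
      ∑ v ∈ (x :: l).toFinset, W d σ v (c v) = Vc d σ (l ++ [x]) x := by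
  induction l with
  | nil =>
    refine ⟨Equiv.refl V, by simp, by simp, ?_⟩
    simp [Vc_cons, Vc_nil, W]
  | cons z rest ih =>
    obtain ⟨hxn, hnd2⟩ := List.nodup_cons.mp hnd
    obtain ⟨hzr, hndr⟩ := List.nodup_cons.mp hnd2
    have hxz : x ≠ z := fun h => hxn (h ▸ List.mem_cons_self (a := z) (l := rest))
    have hxr : x ∉ rest := fun h => hxn (List.mem_cons_of_mem _ h)
    have hnd' : (x :: rest).Nodup := List.nodup_cons.mpr ⟨hxr, hndr⟩
    obtain ⟨c₀, hfix, hhead, hsum⟩ := ih hnd'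
    set h' := rest.headD x with hh'def
    have hh'mem : h' ∈ x :: rest := by
      cases rest with
      | nil => simp [hh'def]
      | cons r rs => simp [hh'def]
    have hznx : z ∉ x :: rest := by
      simp only [List.mem_cons, not_or]
      exact ⟨fun h => hxz h.symm, hzr⟩
    have hc0z : c₀ z = z := hfix z hznx
    refine ⟨c₀.trans (Equiv.swap z x), ?_, ?_, ?_⟩
    · intro v hv
      simp only [List.mem_cons, not_or] at hv
      obtain ⟨hv1, hv2, hv3⟩ := hv
      have : c₀ v = v := hfix v (by simp [hv1, hv3])
      simp only [Equiv.trans_apply, this]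
      exact Equiv.swap_apply_of_ne_of_ne hv2 hv1
    · simp only [List.headD_cons, Equiv.trans_apply, hc0z, Equiv.swap_apply_left]
    · have hT : (x :: z :: rest).toFinset = insert z ((x :: rest).toFinset) := by
        simp only [List.toFinset_cons]
        exact Finset.insert_comm x z rest.toFinset
      have hznotT : z ∉ (x :: rest).toFinset := by
        simpa using hznx
      have hh'T : h' ∈ (x :: rest).toFinset := by simpa using hh'mem
      have hcz : (c₀.trans (Equiv.swap z x)) z = x := by
        simp [Equiv.trans_apply, hc0z]
      have hch' : (c₀.trans (Equiv.swap z x)) h' = z := by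
        simp [Equiv.trans_apply, hhead]
      have hsame : ∀ v ∈ (x :: rest).toFinset.erase h',
          (c₀.trans (Equiv.swap z x)) v = c₀ v := by
        intro v hv
        obtain ⟨hvne, hvT⟩ := Finset.mem_erase.mp hv
        have h1 : c₀ v ≠ z := by
          intro h
          have : v = z := c₀.injective (h.trans hc0z.symm)
          exact hznotT (this ▸ hvT)
        have h2 : c₀ v ≠ x := by
          intro h
          have : v = h' := c₀.injective (h.trans hhead.symm)
          exact hvne this
        simp only [Equiv.trans_apply]
        exact Equiv.swap_apply_of_ne_of_ne h1 h2
      have split1 : ∑ v ∈ (x :: rest).toFinset, W d σ v ((c₀.trans (Equiv.swap z x)) v)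
          = W d σ h' z + ∑ v ∈ (x :: rest).toFinset.erase h',
              W d σ v (c₀ v) := by
        rw [← Finset.add_sum_erase _ _ hh'T, hch']
        congr 1
        exact Finset.sum_congr rfl fun v hv => by rw [hsame v hv]
      have split2 : ∑ v ∈ (x :: rest).toFinset, W d σ v (c₀ v)
          = W d σ h' x + ∑ v ∈ (x :: rest).toFinset.erase h', W d σ v (c₀ v) := by
        rw [← Finset.add_sum_erase _ _ hh'T, hhead]
      have hshift := Vc_shift d σ rest x z x
      rw [hT, Finset.sum_insert hznotT, hcz]
      rw [split1]
      rw [split2] at hsum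
      simp only [List.cons_append, Vc_cons]
      have : Vc d σ (rest ++ [x]) z
          = Vc d σ (rest ++ [x]) x + (W d σ h' z - W d σ h' x) := by linarith
      rw [this, ← hsum]
      ring
lemma cycle_nonneg (d : V → V → ℝ) (S A : Finset V) (σ : Equiv.Perm V)
    (hσ : S.image ⇑σ = A)
    (hopt : ∀ τ : Equiv.Perm V, S.image ⇑τ = A →
      ∑ v ∈ S, d v (σ v) ≤ ∑ v ∈ S, d v (τ v))
    (x : V) (l : List V) (hnd : (x :: l).Nodup) (hS : ∀ v ∈ x :: l, v ∈ S) :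
    0 ≤ Vc d σ (l ++ [x]) x := by
  obtain ⟨c, hfix, -, hsum⟩ := cycle_sum d σ x l hnd
  have hmaps : ∀ v, v ∈ (x :: l) → c v ∈ (x :: l) := by
    intro v hv
    by_contra hcv
    have h1 : c (c v) = c v := hfix _ hcv
    have h2 : c v = v := c.injective h1
    rw [h2] at hcv
    exact hcv hv
  have himg : S.image ⇑c = S := by
    apply Finset.eq_of_subset_of_card_le
    · intro u hu
      obtain ⟨v, hv, rfl⟩ := Finset.mem_image.mp hu
      by_cases hvl : v ∈ (x :: l)
      · exact hS _ (hmaps v hvl)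
      · rw [hfix v hvl]; exact hv
    · rw [Finset.card_image_of_injective _ c.injective]
  have himg' : S.image ⇑c.symm = S := by
    conv_lhs => rw [← himg]
    rw [Finset.image_image]
    have : (⇑c.symm ∘ ⇑c) = id := by
      funext v; simp
    rw [this, Finset.image_id]
  have hτ : S.image ⇑(c.symm.trans σ) = A := by
    rw [← hσ]
    have : ⇑(c.symm.trans σ) = ⇑σ ∘ ⇑c.symm := rfl
    rw [this, ← Finset.image_image, himg']
  have hcost := hopt _ hτ
  have hre : ∑ v ∈ S, d v ((c.symm.trans σ) v) = ∑ v ∈ S, d (c v) (σ v) := by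
    conv_lhs => rw [← himg]
    rw [Finset.sum_image (fun a _ b _ h => c.injective h)]
    apply Finset.sum_congr rfl
    intro v _
    simp
  have hWsum : ∑ v ∈ S, W d σ v (c v) = (∑ v ∈ S, d v ((c.symm.trans σ) v)) - ∑ v ∈ S, d v (σ v) := by
    rw [hre, ← Finset.sum_sub_distrib]
    rfl
  have hWnn : 0 ≤ ∑ v ∈ S, W d σ v (c v) := by rw [hWsum]; linarith
  have hsub : (x :: l).toFinset ⊆ S := fun v hv => hS v (by simpa using hv)
  have : ∑ v ∈ S, W d σ v (c v) = ∑ v ∈ (x :: l).toFinset, W d σ v (c v) := by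
    symm
    apply Finset.sum_subset hsub
    intro v _ hv
    rw [hfix v (by simpa using hv)]
    simp [W]
  rw [this, hsum] at hWnn
  exact hWnn

/-- The finite set of nodup chains with entries in `S`. -/
noncomputable def chains (S : Finset V) : Finset (List V) :=
  (S.toList.sublists.flatMap List.permutations).toFinset

lemma mem_chains {S : Finset V} {l : List V} :
    l ∈ chains S ↔ l.Nodup ∧ ∀ v ∈ l, v ∈ S := by
  simp only [chains, List.mem_toFinset, List.mem_flatMap, List.mem_sublists,
    List.mem_permutations]
  constructor
  · rintro ⟨s, hs, hp⟩
    have hnd : s.Nodup := hs.nodup S.nodup_toList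
    refine ⟨hp.nodup_iff.mpr hnd, fun v hv => ?_⟩
    have : v ∈ s := hp.subset hv
    exact Finset.mem_toList.mp (hs.subset this)
  · rintro ⟨hnd, hsub⟩
    have : l.Subperm S.toList := hnd.subperm (fun v hv => Finset.mem_toList.mpr (hsub v hv))
    obtain ⟨s, hs1, hs2⟩ := this
    exact ⟨s, hs2, hs1.symm⟩

lemma chains_nonempty (S : Finset V) : (chains S).Nonempty :=
  ⟨[], mem_chains.mpr ⟨List.nodup_nil, by simp⟩⟩

lemma exists_potential (d : V → V → ℝ) (hd0 : ∀ v, d v v = 0)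
    (hdnn : ∀ a b, 0 ≤ d a b)
    (hdtri : ∀ a b c, d a c ≤ d a b + d b c)
    (S A : Finset V) (σ : Equiv.Perm V) (hσ : S.image ⇑σ = A)
    (hopt : ∀ τ : Equiv.Perm V, S.image ⇑τ = A →
      ∑ v ∈ S, d v (σ v) ≤ ∑ v ∈ S, d v (τ v)) :
    ∃ u : V → ℝ, (∀ y y', u y ≤ u y' + d y y') ∧
      ∀ x ∈ S, d x (σ x) ≤ u x - u (σ x) := by
  set u : V → ℝ := fun y => (chains S).inf' (chains_nonempty S) (fun l => Vc d σ l y) with hu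
  refine ⟨u, ?_, ?_⟩
  · intro y y'
    obtain ⟨l, hl, hly'⟩ := Finset.exists_mem_eq_inf' (chains_nonempty S)
      (fun l => Vc d σ l y')
    have h1 : u y ≤ Vc d σ l y := Finset.inf'_le _ hl
    have h2 : Vc d σ l y ≤ Vc d σ l y' + d y y' := by
      cases l with
      | nil =>
        simp only [Vc_nil, zero_add]
        exact hdnn y y'
      | cons a t =>
        simp only [Vc_cons, W]
        have := hdtri y y' (σ a)
        linarith
    have h3 : u y' = Vc d σ l y' := hly'
    linarith
  · intro x hx
    obtain ⟨m, hm, hmx⟩ := Finset.exists_mem_eq_inf' (chains_nonempty S)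
      (fun l => Vc d σ l x)
    obtain ⟨hmnd, hmS⟩ := mem_chains.mp hm
    by_cases hxm : x ∈ m
    · obtain ⟨l₂, l₁, rfl⟩ := List.append_of_mem hxm
      have hndparts := List.nodup_append'.mp hmnd
      obtain ⟨hl₂nd, hxl₁nd, hdisj⟩ := hndparts
      have hxl₂ : x ∉ l₂ := fun h => hdisj h (List.mem_cons_self (a := x) (l := l₁))
      have hxl₁ : x ∉ l₁ := (List.nodup_cons.mp hxl₁nd).1
      have hl₁nd : l₁.Nodup := (List.nodup_cons.mp hxl₁nd).2
      have hchain1 : (x :: l₁) ∈ chains S := mem_chains.mpr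
        ⟨hxl₁nd, fun v hv => hmS v (by
          rcases List.mem_cons.mp hv with h | h
          · simp [h]
          · simp [h])⟩
      have h1 : u (σ x) ≤ Vc d σ (x :: l₁) (σ x) := Finset.inf'_le _ hchain1
      have h2 : Vc d σ (x :: l₁) (σ x) = -(d x (σ x)) + Vc d σ l₁ x := by
        simp [Vc_cons, W, hd0]
      have h3 : Vc d σ (l₂ ++ x :: l₁) x = Vc d σ (l₂ ++ [x]) x + Vc d σ l₁ x :=
        Vc_append d σ l₂ x l₁ x
      have h4 : 0 ≤ Vc d σ (l₂ ++ [x]) x := by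
        apply cycle_nonneg d S A σ hσ hopt x l₂
        · exact List.nodup_cons.mpr ⟨hxl₂, hl₂nd⟩
        · intro v hv
          rcases List.mem_cons.mp hv with h | h
          · exact h ▸ hx
          · exact hmS v (by simp [h])
      have hux : u x = Vc d σ (l₂ ++ x :: l₁) x := hmx
      linarith
    · have hchain : (x :: m) ∈ chains S := mem_chains.mpr
        ⟨List.nodup_cons.mpr ⟨hxm, hmnd⟩, by
          intro v hv
          rcases List.mem_cons.mp hv with h | h
          · exact h ▸ hx
          · exact hmS v h⟩
      have h1 : u (σ x) ≤ Vc d σ (x :: m) (σ x) := Finset.inf'_le _ hchain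
      have h2 : Vc d σ (x :: m) (σ x) = -(d x (σ x)) + Vc d σ m x := by
        simp [Vc_cons, W, hd0]
      have hux : u x = Vc d σ m x := hmx
      linarith



lemma cube_sum_split (N : ℕ) (F : (Fin (N + 1) → Bool) → ℝ) :
    ∑ z, F z = ∑ x : Fin N → Bool, (F (Fin.cons false x) + F (Fin.cons true x)) := by
  rw [← Equiv.sum_comp (Fin.consEquiv (fun _ : Fin (N + 1) => Bool)) F]
  rw [Fintype.sum_prod_type]
  rw [Fintype.sum_bool]
  rw [← Finset.sum_add_distrib]
  apply Finset.sum_congr rfl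
  intro x _
  exact add_comm _ _

lemma card_cube (N : ℕ) : Fintype.card (Fin N → Bool) = 2 ^ N := by
  rw [Fintype.card_fun, Fintype.card_bool, Fintype.card_fin]

lemma cons_update' (N : ℕ) (b v : Bool) (x : Fin N → Bool) (i : Fin N) :
    Fin.cons b (Function.update x i v)
      = Function.update (Fin.cons b x : Fin (N + 1) → Bool) i.succ v := by
  funext j
  refine Fin.cases ?_ ?_ j
  · rw [Fin.cons_zero, Function.update_of_ne (Fin.succ_ne_zero i).symm, Fin.cons_zero]
  · intro k
    by_cases hk : k = i
    · subst hk
      rw [Fin.cons_succ, Function.update_self, Function.update_self]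
    · rw [Fin.cons_succ, Function.update_of_ne hk,
        Function.update_of_ne (fun hc => hk (Fin.succ_injective _ hc)), Fin.cons_succ]

lemma update_cons_zero' (N : ℕ) (v b : Bool) (x : Fin N → Bool) :
    Function.update (Fin.cons b x : Fin (N + 1) → Bool) 0 v = Fin.cons v x := by
  funext j
  refine Fin.cases ?_ ?_ j
  · rw [Function.update_self, Fin.cons_zero]
  · intro k
    rw [Function.update_of_ne (Fin.succ_ne_zero k), Fin.cons_succ, Fin.cons_succ]

lemma poincare : ∀ (N : ℕ) (f : (Fin N → Bool) → ℝ),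
    (∀ x i, |f x - f (Function.update x i (!(x i)))| ≤ 1) →
    2 ^ N * (∑ x, f x ^ 2) - (∑ x, f x) ^ 2 ≤ N * 4 ^ N / 4 := by
  intro N
  induction N with
  | zero =>
    intro f _
    rw [Fintype.sum_unique (fun x => f x ^ 2), Fintype.sum_unique f]
    norm_num
  | succ N ih =>
    intro f hf
    set g : (Fin N → Bool) → ℝ :=
      fun x => (f (Fin.cons false x) + f (Fin.cons true x)) / 2 with hgdef
    set h : (Fin N → Bool) → ℝ :=
      fun x => (f (Fin.cons false x) - f (Fin.cons true x)) / 2 with hhdef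
    have hg : ∀ x i, |g x - g (Function.update x i (!(x i)))| ≤ 1 := by
      intro x i
      have key : ∀ b : Bool, |f (Fin.cons b x) -
          f (Fin.cons b (Function.update x i (!(x i))))| ≤ 1 := by
        intro b
        have e1 : Fin.cons b (Function.update x i (!(x i)))
            = Function.update (Fin.cons b x : Fin (N + 1) → Bool) i.succ
                (!((Fin.cons b x : Fin (N + 1) → Bool) i.succ)) := by
          rw [Fin.cons_succ]
          exact cons_update' N b (!(x i)) x i
        rw [e1]
        exact hf (Fin.cons b x) i.succ
      have hfalse := key false
      have htrue := key true
      have : g x - g (Function.update x i (!(x i)))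
          = ((f (Fin.cons false x) - f (Fin.cons false (Function.update x i (!(x i)))))
            + (f (Fin.cons true x) - f (Fin.cons true (Function.update x i (!(x i)))))) / 2 := by
        simp only [hgdef]
        ring
      rw [this]
      rw [abs_div]
      rw [abs_of_nonneg (by norm_num : (0:ℝ) ≤ 2)]
      have := abs_add_le (f (Fin.cons false x) - f (Fin.cons false (Function.update x i (!(x i)))))
        (f (Fin.cons true x) - f (Fin.cons true (Function.update x i (!(x i)))))
      linarith
    have hh : ∀ x, h x ^ 2 ≤ 1 / 4 := by
      intro x
      have e1 : Fin.cons true x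
          = Function.update (Fin.cons false x : Fin (N + 1) → Bool) 0
              (!((Fin.cons false x : Fin (N + 1) → Bool) 0)) := by
        rw [Fin.cons_zero]
        exact (update_cons_zero' N (!false) false x).symm
      have habs : |h x| ≤ 1 / 2 := by
        have := hf (Fin.cons false x) 0
        rw [← e1] at this
        simp only [hhdef]
        rw [abs_div, abs_of_nonneg (by norm_num : (0:ℝ) ≤ 2)]
        linarith
      calc h x ^ 2 = |h x| ^ 2 := (sq_abs _).symm
        _ ≤ (1 / 2) ^ 2 := by
            apply pow_le_pow_left₀ (abs_nonneg _) habs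
        _ = 1 / 4 := by norm_num
    have e1 : ∑ z, f z = 2 * ∑ x, g x := by
      rw [cube_sum_split N f, Finset.mul_sum]
      apply Finset.sum_congr rfl
      intro x _
      simp only [hgdef]
      ring
    have e2 : ∑ z, f z ^ 2 = 2 * ∑ x, g x ^ 2 + 2 * ∑ x, h x ^ 2 := by
      rw [cube_sum_split N (fun z => f z ^ 2), Finset.mul_sum, Finset.mul_sum,
        ← Finset.sum_add_distrib]
      apply Finset.sum_congr rfl
      intro x _
      simp only [hgdef, hhdef]
      ring
    have e3 := ih g hg
    have e4 : ∑ x, h x ^ 2 ≤ 2 ^ N * (1 / 4) := by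
      calc ∑ x, h x ^ 2 ≤ ∑ _x : Fin N → Bool, (1 / 4 : ℝ) :=
            Finset.sum_le_sum (fun x _ => hh x)
        _ = (Fintype.card (Fin N → Bool) : ℝ) * (1 / 4) := by
            rw [Finset.sum_const, Finset.card_univ, nsmul_eq_mul]
        _ = 2 ^ N * (1 / 4) := by rw [card_cube]; norm_num
    rw [e1, e2]
    have p1 : (2:ℝ) ^ (N + 1) = 2 * 2 ^ N := by ring
    have p2 : (4:ℝ) ^ (N + 1) = 4 * 4 ^ N := by ring
    have p3 : (4:ℝ) ^ N = 2 ^ N * 2 ^ N := by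
      rw [show (4:ℝ) = 2 * 2 by norm_num, mul_pow]
    have hkey : 2 * 2 ^ N * (2 * ∑ x, g x ^ 2 + 2 * ∑ x, h x ^ 2)
        - (2 * ∑ x, g x) ^ 2
        = 4 * (2 ^ N * ∑ x, g x ^ 2 - (∑ x, g x) ^ 2) + 4 * 2 ^ N * ∑ x, h x ^ 2 := by
      ring
    have hb : (4:ℝ) * 2 ^ N * ∑ x, h x ^ 2 ≤ 4 * 2 ^ N * (2 ^ N * (1 / 4)) := by
      apply mul_le_mul_of_nonneg_left e4
      positivity
    have hrhs : ((N + 1 : ℕ):ℝ) * (4 * 4 ^ N) / 4 = (N:ℝ) * 4 ^ N + 4 ^ N := by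
      push_cast; ring
    rw [p1, p2, hkey, hrhs]
    have : (4:ℝ) * 2 ^ N * (2 ^ N * (1 / 4)) = 4 ^ N := by rw [p3]; ring
    rw [this] at hb
    linarith



lemma card_cube' (N : ℕ) : Fintype.card (Fin N → Bool) = 2 ^ N := by
  rw [Fintype.card_fun, Fintype.card_bool, Fintype.card_fin]

lemma hamming_update (N : ℕ) (y : Fin N → Bool) (i : Fin N) :
    hammingDist y (Function.update y i (!(y i))) = 1 := by
  show (Finset.univ.filter fun j => y j ≠ Function.update y i (!(y i)) j).card = 1
  have : (Finset.univ.filter fun j => y j ≠ Function.update y i (!(y i)) j) = {i} := by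
    ext j
    simp only [Finset.mem_filter, Finset.mem_univ, true_and, Finset.mem_singleton]
    constructor
    · intro hj
      by_contra hne
      rw [Function.update_of_ne hne] at hj
      exact hj rfl
    · intro hj
      subst hj
      rw [Function.update_self]
      exact (Bool.not_ne_self (y j)).symm
  rw [this, Finset.card_singleton]

lemma dual_bound (N : ℕ) (S A : Finset (Fin N → Bool)) (hcard : S.card = A.card)
    (u : (Fin N → Bool) → ℝ)
    (hLip : ∀ x i, |u x - u (Function.update x i (!(x i)))| ≤ 1)
    (hpoin : ∀ (f : (Fin N → Bool) → ℝ),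
      (∀ x i, |f x - f (Function.update x i (!(x i)))| ≤ 1) →
      2 ^ N * (∑ x, f x ^ 2) - (∑ x, f x) ^ 2 ≤ N * 4 ^ N / 4) :
    ∑ z ∈ S, u z - ∑ z ∈ A, u z ≤ 2 ^ N * Real.sqrt N / 2 := by
  set m : ℝ := (∑ z, u z) / 2 ^ N with hm
  set w : (Fin N → Bool) → ℝ := fun z => u z - m with hw
  have hLipw : ∀ x i, |w x - w (Function.update x i (!(x i)))| ≤ 1 := by
    intro x i
    have : w x - w (Function.update x i (!(x i)))
        = u x - u (Function.update x i (!(x i))) := by simp [hw]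
    rw [this]; exact hLip x i
  have hsum_w : ∀ B : Finset (Fin N → Bool), ∑ z ∈ B, w z = ∑ z ∈ B, u z - B.card * m := by
    intro B
    rw [hw]
    rw [Finset.sum_sub_distrib, Finset.sum_const, nsmul_eq_mul]
  have e0 : ∑ z ∈ S, u z - ∑ z ∈ A, u z = ∑ z ∈ S, w z - ∑ z ∈ A, w z := by
    rw [hsum_w S, hsum_w A, hcard]; ring
  have e1 : ∑ z ∈ S, w z - ∑ z ∈ A, w z = ∑ z ∈ S \ A, w z - ∑ z ∈ A \ S, w z := by
    have h1 := Finset.sum_inter_add_sum_sdiff S A w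
    have h2 := Finset.sum_inter_add_sum_sdiff A S w
    rw [Finset.inter_comm A S] at h2
    linarith
  set D : Finset (Fin N → Bool) := (S \ A) ∪ (A \ S) with hD
  have e2 : ∑ z ∈ S \ A, w z - ∑ z ∈ A \ S, w z ≤ ∑ z ∈ D, |w z| := by
    rw [hD, Finset.sum_union disjoint_sdiff_sdiff]
    have h1 : ∑ z ∈ S \ A, w z ≤ ∑ z ∈ S \ A, |w z| :=
      Finset.sum_le_sum fun z _ => le_abs_self _
    have h2 : -∑ z ∈ A \ S, w z ≤ ∑ z ∈ A \ S, |w z| := by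
      rw [← Finset.sum_neg_distrib]
      exact Finset.sum_le_sum fun z _ => neg_le_abs _
    linarith
  have e3 : (∑ z ∈ D, |w z|) ^ 2 ≤ (D.card : ℝ) * ∑ z ∈ D, w z ^ 2 := by
    have := Finset.sum_mul_sq_le_sq_mul_sq D (fun _ => (1:ℝ)) (fun z => |w z|)
    simp only [one_mul, one_pow] at this
    calc (∑ z ∈ D, |w z|) ^ 2 ≤ (∑ _z ∈ D, (1:ℝ)) * ∑ z ∈ D, |w z| ^ 2 := this
      _ = (D.card : ℝ) * ∑ z ∈ D, w z ^ 2 := by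
          rw [Finset.sum_const, nsmul_eq_mul, mul_one]
          congr 1
          exact Finset.sum_congr rfl fun z _ => sq_abs _
  have hw0 : ∑ z, w z = 0 := by
    rw [hsum_w Finset.univ, Finset.card_univ, card_cube', hm]
    field_simp
    push_cast; ring
  have e5 : ∑ z, w z ^ 2 ≤ N * 2 ^ N / 4 := by
    have hq := hpoin w hLipw
    rw [hw0] at hq
    have h2pos : (0:ℝ) < 2 ^ N := by positivity
    have h4 : (4:ℝ) ^ N = 2 ^ N * 2 ^ N := by
      rw [show (4:ℝ) = 2 * 2 by norm_num, mul_pow]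
    rw [h4] at hq
    norm_num at hq
    have h' : 2 ^ N * (∑ z, w z ^ 2) ≤ 2 ^ N * ((N:ℝ) * 2 ^ N / 4) := by
      have hr : (N:ℝ) * (2 ^ N * 2 ^ N) / 4 = 2 ^ N * ((N:ℝ) * 2 ^ N / 4) := by ring
      linarith [hq]
    exact le_of_mul_le_mul_left h' h2pos
  have e4card : (D.card : ℝ) ≤ 2 ^ N := by
    have := Finset.card_le_univ D
    rw [card_cube'] at this
    have h2 : (D.card : ℝ) ≤ ((2 ^ N : ℕ) : ℝ) := Nat.cast_le.mpr this
    push_cast at h2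
    exact h2
  have e4sub : ∑ z ∈ D, w z ^ 2 ≤ ∑ z, w z ^ 2 :=
    Finset.sum_le_sum_of_subset_of_nonneg (Finset.subset_univ D)
      (fun z _ _ => sq_nonneg _)
  have e6 : (∑ z ∈ D, |w z|) ^ 2 ≤ 2 ^ N * (N * 2 ^ N / 4) := by
    calc (∑ z ∈ D, |w z|) ^ 2 ≤ (D.card : ℝ) * ∑ z ∈ D, w z ^ 2 := e3
      _ ≤ 2 ^ N * (N * 2 ^ N / 4) := by
          apply mul_le_mul e4card (e4sub.trans e5) ?_ (by positivity)
          exact Finset.sum_nonneg fun z _ => sq_nonneg _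
  have hfin : ∑ z ∈ D, |w z| ≤ 2 ^ N * Real.sqrt N / 2 := by
    have hnn : (0:ℝ) ≤ ∑ z ∈ D, |w z| := Finset.sum_nonneg fun z _ => abs_nonneg _
    have htarget : (2:ℝ) ^ N * Real.sqrt N / 2 ≥ 0 := by positivity
    have hsq : (2 ^ N * Real.sqrt N / 2) ^ 2 = 2 ^ N * (N * 2 ^ N / 4) := by
      have : Real.sqrt N ^ 2 = (N:ℝ) := Real.sq_sqrt (by positivity)
      field_simp
      rw [this]
      ring
    nlinarith [e6, hsq, hnn, htarget]
  calc ∑ z ∈ S, u z - ∑ z ∈ A, u z = ∑ z ∈ S, w z - ∑ z ∈ A, w z := e0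
    _ = ∑ z ∈ S \ A, w z - ∑ z ∈ A \ S, w z := e1
    _ ≤ ∑ z ∈ D, |w z| := e2
    _ ≤ 2 ^ N * Real.sqrt N / 2 := hfin


lemma snoc_update' (N : ℕ) (b v : Bool) (x : Fin N → Bool) (i : Fin N) :
    Fin.snoc (Function.update x i v) b
      = Function.update (Fin.snoc x b : Fin (N + 1) → Bool) i.castSucc v := by
  funext j
  refine Fin.lastCases ?_ ?_ j
  · rw [Fin.snoc_last, Function.update_of_ne (Fin.castSucc_lt_last i).ne', Fin.snoc_last]
  · intro k
    by_cases hk : k = i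
    · subst hk
      rw [Fin.snoc_castSucc, Function.update_self, Function.update_self]
    · rw [Fin.snoc_castSucc, Function.update_of_ne hk,
        Function.update_of_ne (fun hc => hk (Fin.castSucc_injective _ hc)), Fin.snoc_castSucc]


end Stmt8Aux

open Stmt8Aux

/-- The average stretch of a map `φ : {0,1}^n → {0,1}^m`. -/
noncomputable def avgStretch (n : ℕ) {m : ℕ} (φ : (Fin n → Bool) → (Fin m → Bool)) : ℝ :=
  (∑ x : Fin n → Bool, ∑ i : Fin n,
    (hammingDist (φ x) (φ (Function.update x i (!(x i)))) : ℝ)) / (2 ^ n * n)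

/-- For any set `A ⊆ {0,1}^n` of density `1/2` there is a bijection
`φ : {0,1}^{n-1} → A` with average stretch at most `2√(2n) + 1 = O(√n)`. -/
theorem stmt8 (n : ℕ) (hn : 0 < n) (A : Finset (Fin (n + 1) → Bool))
    (hA : A.card = 2 ^ n) :
    ∃ φ : (Fin n → Bool) → (Fin (n + 1) → Bool),
      Set.BijOn φ Set.univ (A : Set (Fin (n + 1) → Bool)) ∧
      avgStretch n φ ≤ 2 * Real.sqrt (2 * (n + 1)) + 1 := by
  classical
  set e : (Fin n → Bool) → (Fin (n + 1) → Bool) := fun x => Fin.snoc x false with he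
  have he_inj : Function.Injective e := by
    intro a b hab
    funext i
    have := congrFun hab i.castSucc
    simpa only [he, Fin.snoc_castSucc] using this
  set S : Finset (Fin (n + 1) → Bool) := Finset.univ.image e with hS
  have hScard : S.card = 2 ^ n := by
    rw [hS, Finset.card_image_of_injective _ he_inj, Finset.card_univ, card_cube']
  have hSA : S.card = A.card := by rw [hScard, hA]
  -- construct an initial permutation mapping S onto A
  have hcompl : Sᶜ.card = Aᶜ.card := by
    rw [Finset.card_compl, Finset.card_compl, hSA]
  have e₁ : {x // x ∈ S} ≃ {x // x ∈ A} := Finset.equivOfCardEq hSA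
  have e₂ : {x // x ∉ S} ≃ {x // x ∉ A} := by
    refine (Equiv.subtypeEquivRight (fun x => ?_)).trans
      ((Finset.equivOfCardEq hcompl).trans (Equiv.subtypeEquivRight (fun x => ?_)))
    · exact (Finset.mem_compl).symm
    · exact Finset.mem_compl
  set τ₀ : Equiv.Perm (Fin (n + 1) → Bool) :=
    ((Equiv.sumCompl (· ∈ S)).symm.trans ((e₁.sumCongr e₂).trans
      (Equiv.sumCompl (· ∈ A)))) with hτ₀
  have hτ₀S : S.image ⇑τ₀ = A := by
    apply Finset.eq_of_subset_of_card_le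
    · intro y hy
      obtain ⟨x, hx, rfl⟩ := Finset.mem_image.mp hy
      have h1 : (Equiv.sumCompl (· ∈ S)).symm x = Sum.inl ⟨x, hx⟩ :=
        Equiv.sumCompl_symm_apply_of_pos hx
      simp only [hτ₀, Equiv.trans_apply, h1, Equiv.sumCongr_apply, Sum.map_inl,
        Equiv.sumCompl_apply_inl]
      exact (e₁ ⟨x, hx⟩).2
    · rw [Finset.card_image_of_injective _ τ₀.injective, hSA]
  -- min-cost permutation
  set d : (Fin (n + 1) → Bool) → (Fin (n + 1) → Bool) → ℝ :=
    fun a b => ((hammingDist a b : ℕ) : ℝ) with hd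
  set P : Finset (Equiv.Perm (Fin (n + 1) → Bool)) :=
    Finset.univ.filter (fun τ => S.image ⇑τ = A) with hP
  have hPne : P.Nonempty := ⟨τ₀, by simp [hP, hτ₀S]⟩
  obtain ⟨σ, hσP, hopt0⟩ := Finset.exists_min_image P
    (fun τ => ∑ v ∈ S, d v (τ v)) hPne
  have hσ : S.image ⇑σ = A := (Finset.mem_filter.mp hσP).2
  have hopt : ∀ τ : Equiv.Perm (Fin (n + 1) → Bool), S.image ⇑τ = A →
      ∑ v ∈ S, d v (σ v) ≤ ∑ v ∈ S, d v (τ v) := by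
    intro τ hτ
    exact hopt0 τ (by simp [hP, hτ])
  -- potential
  have hd0 : ∀ v, d v v = 0 := by intro v; simp [hd]
  have hdnn : ∀ a b, 0 ≤ d a b := by intro a b; simp [hd]
  have hdtri : ∀ a b c, d a c ≤ d a b + d b c := by
    intro a b c
    simp only [hd]
    exact_mod_cast hammingDist_triangle a b c
  obtain ⟨u, hLip, hP2⟩ := exists_potential d hd0 hdnn hdtri S A σ hσ hopt
  have hLipC : ∀ x i, |u x - u (Function.update x i (!(x i)))| ≤ 1 := by
    intro x i
    have h1 : d x (Function.update x i (!(x i))) = 1 := by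
      simp only [hd]
      rw [hamming_update]
      norm_num
    have h2 : d (Function.update x i (!(x i))) x = 1 := by
      simp only [hd]
      rw [hammingDist_comm, hamming_update]
      norm_num
    rw [abs_sub_le_iff]
    constructor
    · have := hLip x (Function.update x i (!(x i))); rw [h1] at this; linarith
    · have := hLip (Function.update x i (!(x i))) x; rw [h2] at this; linarith
  -- cost bound
  set K : ℝ := ∑ v ∈ S, d v (σ v) with hK
  have hK1 : K ≤ ∑ z ∈ S, u z - ∑ z ∈ A, u z := by
    have h1 : ∑ z ∈ A, u z = ∑ v ∈ S, u (σ v) := by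
      rw [← hσ, Finset.sum_image (fun a _ b _ h => σ.injective h)]
    rw [hK, h1, ← Finset.sum_sub_distrib]
    exact Finset.sum_le_sum (fun v hv => hP2 v hv)
  have hK2 : ∑ z ∈ S, u z - ∑ z ∈ A, u z
      ≤ 2 ^ (n + 1) * Real.sqrt (n + 1) / 2 := by
    have := dual_bound (n + 1) S A hSA u hLipC (poincare (n + 1))
    have hc : ((n + 1 : ℕ) : ℝ) = (n : ℝ) + 1 := by push_cast; ring
    rw [hc] at this
    exact this
  have hKb : K ≤ 2 ^ n * Real.sqrt ((n : ℝ) + 1) := by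
    have h2 : (2:ℝ) ^ (n + 1) * Real.sqrt ((n:ℝ) + 1) / 2
        = 2 ^ n * Real.sqrt ((n:ℝ) + 1) := by ring
    linarith [hK1, hK2, h2.symm.le]
  -- the bijection
  refine ⟨fun x => σ (e x), ?_, ?_⟩
  · refine ⟨?_, ?_, ?_⟩
    · intro x _
      have hex : e x ∈ S := Finset.mem_image_of_mem e (Finset.mem_univ x)
      have : σ (e x) ∈ S.image ⇑σ := Finset.mem_image_of_mem _ hex
      rw [hσ] at this
      exact Finset.mem_coe.mpr this
    · intro a _ b _ hab
      exact he_inj (σ.injective hab)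
    · intro y hy
      have hyA : y ∈ A := Finset.mem_coe.mp hy
      rw [← hσ] at hyA
      obtain ⟨s, hs, rfl⟩ := Finset.mem_image.mp hyA
      rw [hS] at hs
      obtain ⟨x, _, rfl⟩ := Finset.mem_image.mp hs
      exact ⟨x, Set.mem_univ x, rfl⟩
  -- average stretch bound
  · set D : (Fin n → Bool) → ℝ := fun x => d (e x) (σ (e x)) with hD
    have hsumD : ∑ x, D x = K := by
      rw [hK, hS, Finset.sum_image (fun a _ b _ h => he_inj h)]
    have hterm : ∀ (x : Fin n → Bool) (i : Fin n),
        ((hammingDist (σ (e x)) (σ (e (Function.update x i (!(x i))))) : ℕ) : ℝ)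
          ≤ D x + 1 + D (Function.update x i (!(x i))) := by
      intro x i
      set x' := Function.update x i (!(x i)) with hx'
      have hee : hammingDist (e x) (e x') = 1 := by
        have h1 : e x' = Function.update (e x) i.castSucc (!((e x) i.castSucc)) := by
          simp only [he, hx']
          rw [Fin.snoc_castSucc]
          exact snoc_update' n false (!(x i)) x i
        rw [h1]
        exact hamming_update (n + 1) (e x) i.castSucc
      have htri : hammingDist (σ (e x)) (σ (e x'))
          ≤ hammingDist (σ (e x)) (e x) + hammingDist (e x) (e x')
            + hammingDist (e x') (σ (e x')) := by
        calc hammingDist (σ (e x)) (σ (e x'))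
            ≤ hammingDist (σ (e x)) (e x') + hammingDist (e x') (σ (e x')) :=
              hammingDist_triangle _ _ _
          _ ≤ (hammingDist (σ (e x)) (e x) + hammingDist (e x) (e x'))
              + hammingDist (e x') (σ (e x')) := by
              have := hammingDist_triangle (σ (e x)) (e x) (e x')
              omega
      have hcast : (D x : ℝ) = ((hammingDist (σ (e x)) (e x) : ℕ) : ℝ) := by
        simp only [hD, hd]
        rw [hammingDist_comm]
      have hcast2 : (D x' : ℝ) = ((hammingDist (e x') (σ (e x')) : ℕ) : ℝ) := by
        simp only [hD, hd]
      rw [hcast, hcast2]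
      have := htri
      rw [hee] at this
      exact_mod_cast this
    -- flip involution
    have hflip : ∀ i : Fin n, ∑ x : Fin n → Bool,
        D (Function.update x i (!(x i))) = ∑ x, D x := by
      intro i
      have hinv : Function.Involutive
          (fun x : Fin n → Bool => Function.update x i (!(x i))) := by
        intro x
        funext j
        by_cases hj : j = i
        · subst hj
          simp [Function.update_self]
        · simp [Function.update_of_ne hj]
      exact Equiv.sum_comp hinv.toPerm D
    have hnum : ∑ x : Fin n → Bool, ∑ i : Fin n,
        ((hammingDist (σ (e x)) (σ (e (Function.update x i (!(x i))))) : ℕ) : ℝ)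
        ≤ 2 * n * K + 2 ^ n * n := by
      calc ∑ x : Fin n → Bool, ∑ i : Fin n,
            ((hammingDist (σ (e x)) (σ (e (Function.update x i (!(x i))))) : ℕ) : ℝ)
          ≤ ∑ x : Fin n → Bool, ∑ i : Fin n,
            (D x + 1 + D (Function.update x i (!(x i)))) := by
            apply Finset.sum_le_sum
            intro x _
            apply Finset.sum_le_sum
            intro i _
            exact hterm x i
        _ = 2 * n * K + 2 ^ n * n := by
            have hsplit : ∀ x : Fin n → Bool, ∑ i : Fin n,
                (D x + 1 + D (Function.update x i (!(x i))))
                = n * D x + n + ∑ i, D (Function.update x i (!(x i))) := by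
              intro x
              rw [Finset.sum_add_distrib, Finset.sum_add_distrib, Finset.sum_const,
                Finset.sum_const, Finset.card_univ, Fintype.card_fin,
                nsmul_eq_mul, nsmul_eq_mul, mul_one]
            rw [Finset.sum_congr rfl (fun x _ => hsplit x)]
            rw [Finset.sum_add_distrib, Finset.sum_add_distrib]
            rw [← Finset.mul_sum, Finset.sum_const, Finset.card_univ, card_cube',
              nsmul_eq_mul]
            rw [Finset.sum_comm]
            rw [Finset.sum_congr rfl (fun i _ => hflip i)]
            rw [Finset.sum_const, Finset.card_univ, Fintype.card_fin, nsmul_eq_mul,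
              hsumD]
            push_cast
            ring
    -- conclude
    have hden : (0:ℝ) < 2 ^ n * n := by
      have : (0:ℝ) < (n:ℝ) := by exact_mod_cast hn
      positivity
    have havg : avgStretch n (fun x => σ (e x)) ≤ (2 * n * K + 2 ^ n * n) / (2 ^ n * n) := by
      unfold avgStretch
      gcongr
    have hne1 : ((2:ℝ) ^ n) ≠ 0 := by positivity
    have hne2 : ((n:ℝ)) ≠ 0 := by
      have : (0:ℝ) < (n:ℝ) := by exact_mod_cast hn
      linarith
    have h1 : (2 * n * K + 2 ^ n * (n:ℝ)) / (2 ^ n * n) = 2 * K / 2 ^ n + 1 := by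
      field_simp
    have h2 : 2 * K / 2 ^ n ≤ 2 * Real.sqrt ((n:ℝ) + 1) := by
      rw [div_le_iff₀ (by positivity : (0:ℝ) < 2 ^ n)]
      calc 2 * K ≤ 2 * (2 ^ n * Real.sqrt ((n:ℝ) + 1)) := by linarith [hKb]
        _ = 2 * Real.sqrt ((n:ℝ) + 1) * 2 ^ n := by ring
    have h3 : Real.sqrt ((n:ℝ) + 1) ≤ Real.sqrt (2 * ((n:ℝ) + 1)) := by
      apply Real.sqrt_le_sqrt
      have : (0:ℝ) ≤ (n:ℝ) := Nat.cast_nonneg n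
      linarith
    calc avgStretch n (fun x => σ (e x)) ≤ (2 * n * K + 2 ^ n * n) / (2 ^ n * n) := havg
      _ = 2 * K / 2 ^ n + 1 := h1
      _ ≤ 2 * Real.sqrt ((n:ℝ) + 1) + 1 := by linarith
      _ ≤ 2 * Real.sqrt (2 * ((n:ℝ) + 1)) + 1 := by linarith
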